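/- Let ω be a Borel measure on ℝ with ∫_ℝ (1+λ²)^{-1} dω(λ) = 1 and ω(ℝ) = ∞, let Ĥ be multiplication by λ in L²(ℝ; dω) with dom(Ĥ) = L²(ℝ; (1+λ²)dω), and Ḣ̂ its restriction to {f ∈ dom(Ĥ) : ∫_ℝ f dω = 0}. Set g(λ) = (∫_ℝ (1+ν²)^{-2} dω(ν))^{-1/2} (1+λ²)^{-1}, so that ‖g‖_{L²(ω)} = 1 and dom(Ĥ) = ℂ·g ∔ dom(Ḣ̂), and let ℓ be the linear functional on dom(Ĥ) defined by ℓ(f) = c when f = c·g + h with h ∈ dom(Ḣ̂). Then sup over f ∈ dom(Ĥ), f ≠ 0, of |ℓ(f)|² / (‖f‖²_{L²(ω)} + ‖Ĥf‖²_{L²(ω)}) equals ∫_ℝ (1+λ²)^{-2} dω(λ). -/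

import Mathlib

open MeasureTheory

private lemma l2_normSq {μ : Measure ℝ} (f : Lp ℂ 2 μ) :
    ‖f‖ ^ 2 = ∫ a, ‖(f : ℝ → ℂ) a‖ ^ 2 ∂μ := by
  rw [← inner_self_eq_norm_sq (𝕜 := ℂ) f, L2.inner_def,
    ← integral_re (L2.integrable_inner f f)]
  refine integral_congr_ae (Filter.Eventually.of_forall fun a => ?_)
  simp [Complex.sq_norm, Complex.normSq_apply, ← Complex.ofReal_pow]

private lemma cs_aux {μ : Measure ℝ} {φ : ℝ → ℂ} (hφ : AEStronglyMeasurable φ μ)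
    (h1 : Integrable (fun lam : ℝ => (1 + lam ^ 2) * ‖φ lam‖ ^ 2) μ)
    (h2 : Integrable (fun lam : ℝ => (1 + lam ^ 2)⁻¹) μ) :
    (∫ lam, ‖φ lam‖ ∂μ) ^ 2 ≤
      (∫ lam, (1 + lam ^ 2) * ‖φ lam‖ ^ 2 ∂μ) * (∫ lam : ℝ, (1 + lam ^ 2)⁻¹ ∂μ) := by
  set u0 : ℝ → ℝ := fun lam => Real.sqrt (1 + lam ^ 2) * ‖φ lam‖ with hu0
  set v0 : ℝ → ℝ := fun lam => (Real.sqrt (1 + lam ^ 2))⁻¹ with hv0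
  have hpos : ∀ lam : ℝ, (0 : ℝ) < 1 + lam ^ 2 := fun lam => by positivity
  have hu0sq : ∀ lam, u0 lam ^ 2 = (1 + lam ^ 2) * ‖φ lam‖ ^ 2 := fun lam => by
    rw [hu0, mul_pow, Real.sq_sqrt (hpos lam).le]
  have hv0sq : ∀ lam, v0 lam ^ 2 = (1 + lam ^ 2)⁻¹ := fun lam => by
    simp only [hv0]
    rw [inv_pow, Real.sq_sqrt (hpos lam).le]
  have hu0m : AEStronglyMeasurable u0 μ :=
    ((Real.continuous_sqrt.comp (by continuity)).aestronglyMeasurable).mul hφ.norm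
  have hv0m : AEStronglyMeasurable v0 μ :=
    ((Real.continuous_sqrt.comp (by continuity)).inv₀ (fun lam =>
      (Real.sqrt_ne_zero'.mpr (hpos lam)))).aestronglyMeasurable
  have hu : MemLp u0 2 μ := by
    refine (memLp_two_iff_integrable_sq hu0m).mpr ?_
    exact h1.congr (Filter.Eventually.of_forall fun lam => (hu0sq lam).symm)
  have hv : MemLp v0 2 μ := by
    refine (memLp_two_iff_integrable_sq hv0m).mpr ?_
    exact h2.congr (Filter.Eventually.of_forall fun lam => (hv0sq lam).symm)
  set u := hu.toLp u0
  set v := hv.toLp v0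
  have hinner : (inner ℝ u v : ℝ) = ∫ lam, ‖φ lam‖ ∂μ := by
    rw [L2.inner_def]
    refine integral_congr_ae ?_
    filter_upwards [hu.coeFn_toLp, hv.coeFn_toLp] with lam h1' h2'
    simp only [RCLike.inner_apply, starRingEnd_apply, star_trivial]
    rw [h1', h2', hu0, hv0]
    field_simp
  have hnu : ‖u‖ ^ 2 = ∫ lam, (1 + lam ^ 2) * ‖φ lam‖ ^ 2 ∂μ := by
    rw [← real_inner_self_eq_norm_sq, L2.inner_def]
    refine integral_congr_ae ?_
    filter_upwards [hu.coeFn_toLp] with lam h1'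
    simp only [RCLike.inner_apply, starRingEnd_apply, star_trivial]
    rw [h1', ← hu0sq lam, sq]
  have hnv : ‖v‖ ^ 2 = ∫ lam : ℝ, (1 + lam ^ 2)⁻¹ ∂μ := by
    rw [← real_inner_self_eq_norm_sq, L2.inner_def]
    refine integral_congr_ae ?_
    filter_upwards [hv.coeFn_toLp] with lam h1'
    simp only [RCLike.inner_apply, starRingEnd_apply, star_trivial]
    rw [h1', ← hv0sq lam, sq]
  have hle : ∫ lam, ‖φ lam‖ ∂μ ≤ ‖u‖ * ‖v‖ := hinner ▸ real_inner_le_norm u v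
  have h0 : (0 : ℝ) ≤ ∫ lam, ‖φ lam‖ ∂μ := integral_nonneg fun lam => norm_nonneg _
  calc (∫ lam, ‖φ lam‖ ∂μ) ^ 2 ≤ (‖u‖ * ‖v‖) ^ 2 := pow_le_pow_left₀ h0 hle 2
    _ = ‖u‖ ^ 2 * ‖v‖ ^ 2 := by ring
    _ = _ := by rw [hnu, hnv]

/-- Lemma 4.2 of Gesztesy–Kalton–Makarov–Tsekanovskii.
Let `ω` be a Borel measure on `ℝ` with `∫ (1+λ²)⁻¹ dω = 1` and `ω(ℝ) = ∞`, `Ĥ`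
multiplication by `λ` in `L²(ℝ;dω)` with domain `L²(ℝ;(1+λ²)dω)`, and
`g(λ) = (∫ (1+ν²)⁻² dω(ν))^{-1/2} (1+λ²)⁻¹`, so that
`dom Ĥ = ℂ·g ∔ dom Ḣ̂` with `dom Ḣ̂ = {f ∈ dom Ĥ : ∫ f dω = 0}`; let `ℓ(f) = c` when
`f = c·g + h`, `h ∈ dom Ḣ̂`.  Then
`sup_{0 ≠ f ∈ dom Ĥ} |ℓ(f)|²/(‖f‖² + ‖Ĥf‖²) = ∫ (1+λ²)⁻² dω(λ)`. -/
theorem statement15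
    (ω : Measure ℝ)
    (hnorm : ∫ lam : ℝ, (1 + lam ^ 2)⁻¹ ∂ω = 1)
    (hinf : ω Set.univ = ⊤)
    (Hhat : Lp ℂ 2 ω →ₗ.[ℂ] Lp ℂ 2 ω)
    (hHdom : ∀ f : Lp ℂ 2 ω, f ∈ Hhat.domain ↔
      MemLp (fun lam : ℝ => (lam : ℂ) * (f : ℝ → ℂ) lam) 2 ω)
    (hHact : ∀ f : Hhat.domain,
      (Hhat f : ℝ → ℂ) =ᵐ[ω] fun lam : ℝ => (lam : ℂ) * ((f : Lp ℂ 2 ω) : ℝ → ℂ) lam)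
    -- the normalized element g(λ) = (∫ (1+ν²)⁻² dω(ν))^{-1/2} (1+λ²)⁻¹ ∈ dom Ĥ:
    (g : Lp ℂ 2 ω)
    (hg : (g : ℝ → ℂ) =ᵐ[ω] fun lam : ℝ =>
      ((((∫ t : ℝ, ((1 + t ^ 2) ^ 2)⁻¹ ∂ω) ^ (-(1/2 : ℝ)) : ℝ) : ℂ) *
        (((1 + lam ^ 2)⁻¹ : ℝ) : ℂ)))
    (hgdom : g ∈ Hhat.domain)
    -- the linear functional ℓ on dom Ĥ: ℓ(f) = c iff f - c·g ∈ dom Ḣ̂, i.e.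
    -- iff ∫ (f - c g) dω = 0:
    (ℓ : Hhat.domain → ℂ)
    (hℓ : ∀ f : Hhat.domain,
      ∫ lam : ℝ, (((f : Lp ℂ 2 ω) : ℝ → ℂ) lam - ℓ f * (g : ℝ → ℂ) lam) ∂ω = 0) :
    IsLUB {r : ℝ | ∃ f : Hhat.domain, (f : Lp ℂ 2 ω) ≠ 0 ∧
        r = ‖ℓ f‖ ^ 2 / (‖(f : Lp ℂ 2 ω)‖ ^ 2 + ‖Hhat f‖ ^ 2)}
      (∫ lam : ℝ, ((1 + lam ^ 2) ^ 2)⁻¹ ∂ω) := by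
  have hpos : ∀ lam : ℝ, (0:ℝ) < 1 + lam ^ 2 := fun lam => by positivity
  set I : ℝ := ∫ lam : ℝ, ((1 + lam ^ 2) ^ 2)⁻¹ ∂ω with hIdef
  -- integrability facts
  have hint1 : Integrable (fun lam : ℝ => (1 + lam ^ 2)⁻¹) ω := by
    by_contra h
    rw [integral_undef h] at hnorm
    exact zero_ne_one hnorm
  have hmeas2 : AEStronglyMeasurable (fun lam : ℝ => ((1 + lam ^ 2) ^ 2)⁻¹) ω := by
    refine Continuous.aestronglyMeasurable ?_
    exact Continuous.inv₀ (by continuity) (fun lam => by positivity)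
  have hint2 : Integrable (fun lam : ℝ => ((1 + lam ^ 2) ^ 2)⁻¹) ω := by
    refine hint1.mono hmeas2 (Filter.Eventually.of_forall fun lam => ?_)
    rw [Real.norm_eq_abs, Real.norm_eq_abs, abs_of_pos (by positivity),
      abs_of_pos (by positivity)]
    refine inv_anti₀ (hpos lam) ?_
    nlinarith [hpos lam, sq_nonneg lam]
  have hI0 : 0 < I := by
    rcases lt_or_eq_of_le (integral_nonneg (μ := ω) (f := fun lam : ℝ => ((1 + lam ^ 2) ^ 2)⁻¹) (fun lam => (by positivity :
      (0:ℝ) ≤ ((1 + lam ^ 2) ^ 2)⁻¹))) with h | h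
    · exact h
    · exfalso
      have hz := (integral_eq_zero_iff_of_nonneg
        (fun lam => by positivity) hint2).mp h.symm
      have hω : ω = 0 := by
        refine Measure.measure_univ_eq_zero.mp ?_
        rw [Filter.EventuallyEq, ae_iff] at hz
        convert hz using 2
        ext lam
        simp only [Set.mem_univ, Set.mem_setOf_eq, Pi.zero_apply, true_iff]
        positivity
      rw [hω] at hnorm
      simp at hnorm
  set c : ℝ := I ^ (-(1/2 : ℝ)) with hcdef
  have hc : 0 < c := Real.rpow_pos_of_pos hI0 _
  have hc2 : c ^ 2 = I⁻¹ := by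
    rw [hcdef, ← Real.rpow_natCast (I ^ (-(1/2:ℝ))) 2, ← Real.rpow_mul hI0.le]
    norm_num [Real.rpow_neg_one]
  -- g : integrability and integral
  have hgint : Integrable (g : ℝ → ℂ) ω := by
    refine Integrable.congr ?_ hg.symm
    have : Integrable (fun lam : ℝ => ((c * (1 + lam ^ 2)⁻¹ : ℝ) : ℂ)) ω :=
      (hint1.const_mul c).ofReal
    refine this.congr (Filter.Eventually.of_forall fun lam => ?_)
    push_cast
    ring
  have hgI : ∫ lam, (g : ℝ → ℂ) lam ∂ω = (c : ℂ) := by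
    rw [integral_congr_ae hg]
    have h1 : ∫ lam, ((c : ℂ) * (((1 + lam ^ 2)⁻¹ : ℝ) : ℂ)) ∂ω
        = ∫ lam, ((c * (1 + lam ^ 2)⁻¹ : ℝ) : ℂ) ∂ω := by
      refine integral_congr_ae (Filter.Eventually.of_forall fun lam => ?_)
      push_cast; ring
    have h2 : ∫ lam : ℝ, ((c * (1 + lam ^ 2)⁻¹ : ℝ) : ℂ) ∂ω
        = ((∫ lam : ℝ, c * (1 + lam ^ 2)⁻¹ ∂ω : ℝ) : ℂ) := integral_ofReal (𝕜 := ℂ)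
    rw [h1, h2, integral_const_mul, hnorm, mul_one]
  -- main per-element facts
  have main : ∀ f : Hhat.domain,
      (‖(f : Lp ℂ 2 ω)‖ ^ 2 + ‖Hhat f‖ ^ 2
        = ∫ lam, (1 + lam ^ 2) * ‖((f : Lp ℂ 2 ω) : ℝ → ℂ) lam‖ ^ 2 ∂ω)
      ∧ ℓ f * (c : ℂ) = ∫ lam, ((f : Lp ℂ 2 ω) : ℝ → ℂ) lam ∂ω
      ∧ ‖∫ lam, ((f : Lp ℂ 2 ω) : ℝ → ℂ) lam ∂ω‖ ^ 2
        ≤ ∫ lam, (1 + lam ^ 2) * ‖((f : Lp ℂ 2 ω) : ℝ → ℂ) lam‖ ^ 2 ∂ω := by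
    intro f
    set F : ℝ → ℂ := ((f : Lp ℂ 2 ω) : ℝ → ℂ) with hFdef
    have hF2 : MemLp F 2 ω := Lp.memLp _
    have IA : Integrable (fun lam => ‖F lam‖ ^ 2) ω :=
      (memLp_two_iff_integrable_sq_norm hF2.1).mp hF2
    have hlF : MemLp (fun lam : ℝ => (lam : ℂ) * F lam) 2 ω := (hHdom _).mp f.2
    have IBn : Integrable (fun lam : ℝ => ‖(lam : ℂ) * F lam‖ ^ 2) ω :=
      (memLp_two_iff_integrable_sq_norm hlF.1).mp hlF
    have hnormmul : ∀ lam : ℝ, ‖(lam : ℂ) * F lam‖ ^ 2 = lam ^ 2 * ‖F lam‖ ^ 2 := by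
      intro lam
      rw [norm_mul, mul_pow, Complex.norm_real, Real.norm_eq_abs, sq_abs]
    have IB : Integrable (fun lam : ℝ => lam ^ 2 * ‖F lam‖ ^ 2) ω :=
      IBn.congr (Filter.Eventually.of_forall fun lam => (hnormmul lam))
    have IM : Integrable (fun lam : ℝ => (1 + lam ^ 2) * ‖F lam‖ ^ 2) ω := by
      refine (IA.add IB).congr (Filter.Eventually.of_forall fun lam => ?_)
      simp only [Pi.add_apply]
      ring
    refine ⟨?_, ?_, ?_⟩
    · -- norms
      have e1 : ‖(f : Lp ℂ 2 ω)‖ ^ 2 = ∫ lam, ‖F lam‖ ^ 2 ∂ω := l2_normSq _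
      have e2 : ‖Hhat f‖ ^ 2 = ∫ lam, lam ^ 2 * ‖F lam‖ ^ 2 ∂ω := by
        rw [l2_normSq]
        refine integral_congr_ae ?_
        filter_upwards [hHact f] with lam h
        rw [h, hnormmul lam]
      rw [e1, e2, ← integral_add IA IB]
      refine integral_congr_ae (Filter.Eventually.of_forall fun lam => ?_)
      simp only [Pi.add_apply]
      ring
    · -- the functional
      have hFint : Integrable F ω := by
        refine Integrable.mono ((IM.add hint1).div_const 2) hF2.1
          (Filter.Eventually.of_forall fun lam => ?_)
        have h1 : (0:ℝ) ≤ ((1 + lam ^ 2) * ‖F lam‖ ^ 2 + (1 + lam ^ 2)⁻¹) / 2 := by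
          positivity
        simp only [Pi.add_apply]
        rw [Real.norm_eq_abs, abs_of_nonneg h1]
        nlinarith [sq_nonneg ((1 + lam ^ 2) * ‖F lam‖ - 1), hpos lam,
          norm_nonneg (F lam), mul_inv_cancel₀ (ne_of_gt (hpos lam)),
          inv_pos.mpr (hpos lam), sq_nonneg (‖F lam‖)]
      have h := hℓ f
      rw [integral_sub hFint (hgint.const_mul (ℓ f)), integral_const_mul, hgI,
        sub_eq_zero] at h
      exact h.symm
    · -- Cauchy-Schwarz
      have h1 : ‖∫ lam, F lam ∂ω‖ ≤ ∫ lam, ‖F lam‖ ∂ω := norm_integral_le_integral_norm F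
      have h2 := cs_aux hF2.1 IM hint1
      rw [hnorm, mul_one] at h2
      calc ‖∫ lam, F lam ∂ω‖ ^ 2 ≤ (∫ lam, ‖F lam‖ ∂ω) ^ 2 :=
            pow_le_pow_left₀ (norm_nonneg _) h1 2
        _ ≤ _ := h2
  constructor
  · -- upper bound
    rintro r ⟨f, hf0, rfl⟩
    obtain ⟨e1, e2, e3⟩ := main f
    set F : ℝ → ℂ := ((f : Lp ℂ 2 ω) : ℝ → ℂ)
    set M : ℝ := ∫ lam, (1 + lam ^ 2) * ‖F lam‖ ^ 2 ∂ω with hM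
    have hfn : 0 < ‖(f : Lp ℂ 2 ω)‖ := norm_pos_iff.mpr hf0
    have hMpos : 0 < ‖(f : Lp ℂ 2 ω)‖ ^ 2 + ‖Hhat f‖ ^ 2 := by positivity
    have habs : ‖ℓ f‖ ^ 2 * c ^ 2 = ‖∫ lam, F lam ∂ω‖ ^ 2 := by
      have := congrArg norm e2
      rw [norm_mul, Complex.norm_real, Real.norm_eq_abs, abs_of_pos hc] at this
      rw [← mul_pow, this]
    have hlf : ‖ℓ f‖ ^ 2 = ‖∫ lam, F lam ∂ω‖ ^ 2 * I := by
      have hcne : (c : ℝ) ^ 2 ≠ 0 := by positivity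
      have h4 : ‖ℓ f‖ ^ 2 = ‖∫ lam, F lam ∂ω‖ ^ 2 * (c ^ 2)⁻¹ :=
        (eq_mul_inv_iff_mul_eq₀ hcne).mpr habs
      rw [h4, hc2, inv_inv]
    have hMpos' : 0 < M := by rw [← e1]; exact hMpos
    rw [hlf, e1, div_le_iff₀ hMpos']
    nlinarith [mul_le_mul_of_nonneg_right e3 hI0.le]
  · -- least: the value I is attained at f₀ = g
    intro b hb
    set f₀ : Hhat.domain := ⟨g, hgdom⟩ with hf₀
    obtain ⟨e1, e2, e3⟩ := main f₀
    have hcoe : ((f₀ : Lp ℂ 2 ω) : ℝ → ℂ) = (g : ℝ → ℂ) := rfl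
    rw [hcoe] at e1 e2
    have hMg : ∫ lam, (1 + lam ^ 2) * ‖(g : ℝ → ℂ) lam‖ ^ 2 ∂ω = I⁻¹ := by
      have hae : ∀ᵐ lam ∂ω,
          (1 + lam ^ 2) * ‖(g : ℝ → ℂ) lam‖ ^ 2 = c ^ 2 * (1 + lam ^ 2)⁻¹ := by
        filter_upwards [hg] with lam h
        rw [h, norm_mul, Complex.norm_real, Complex.norm_real, Real.norm_eq_abs,
          Real.norm_eq_abs, abs_of_pos hc, abs_of_pos (inv_pos.mpr (hpos lam))]
        field_simp
      rw [integral_congr_ae hae, integral_const_mul, hnorm, mul_one, hc2]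
    rw [hMg] at e1
    have hcne : (c : ℂ) ≠ 0 := Complex.ofReal_ne_zero.mpr hc.ne'
    have hone : ℓ f₀ = 1 := by
      have h5 : ℓ f₀ * (c : ℂ) = 1 * (c : ℂ) := by rw [one_mul, e2, hgI]
      exact mul_right_cancel₀ hcne h5
    have hgne : ((f₀ : Lp ℂ 2 ω)) ≠ 0 := by
      intro h0
      have hz : f₀ = 0 := Subtype.ext h0
      rw [hz] at e1
      simp only [ZeroMemClass.coe_zero, norm_zero, map_zero] at e1
      have : (0:ℝ) < I⁻¹ := inv_pos.mpr hI0
      rw [← e1] at this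
      norm_num at this
    refine hb ⟨f₀, hgne, ?_⟩
    rw [hone, e1]
    simp [inv_inv]
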